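/- Let K, N > 0 and a, b ∈ ℤ with m = a*N − b*K > 0, and let 𝓛 be a (K,N)-periodic lattice path with 𝓛 ≤ 𝓛[a,b]. Then for every (x,y) ∈ ℤ² there exists a unique quadruple (x', y', s, r) ∈ ℤ⁴ such that (x', y') ∈ Δ(𝓛) and (x, y) = (x' + s*K + r*a, y' − s*N − r*b). -/

import Mathlib

/-- A `(K,N)`-periodic lattice path. -/
def IsLP (K N : ℤ) (L : ℤ → ℤ) : Prop :=
  Antitone L ∧ ∀ y : ℤ, L (y + N) = L y - K

/-- The shifted path `L[a,b] : y ↦ L(y+b) + a`. -/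
def LPshift (a b : ℤ) (L : ℤ → ℤ) : ℤ → ℤ := fun y => L (y + b) + a

/-- The extended fundamental domain `Δ'(L) = {(x,y) : L y ≤ x < L(y+b) + a}`. -/
def DeltaP (a b : ℤ) (L : ℤ → ℤ) : Set (ℤ × ℤ) :=
  {p : ℤ × ℤ | L p.2 ≤ p.1 ∧ p.1 < LPshift a b L p.2}

/-- The fundamental domain `Δ(L) = {(x,y) ∈ Δ'(L) : 0 ≤ y < N}`. -/
def Delta (N a b : ℤ) (L : ℤ → ℤ) : Set (ℤ × ℤ) :=
  {p : ℤ × ℤ | p ∈ DeltaP a b L ∧ 0 ≤ p.2 ∧ p.2 < N}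

lemma IsLP.add_mul' {K N : ℤ} {L : ℤ → ℤ} (hL : IsLP K N L) (z t : ℤ) :
    L (z + t * N) = L z - t * K := by
  induction t using Int.induction_on with
  | zero => simp
  | succ k ih =>
      have h := hL.2 (z + (k : ℤ) * N)
      rw [show z + (k : ℤ) * N + N = z + ((k : ℤ) + 1) * N by ring] at h
      rw [h, ih]; ring
  | pred k ih =>
      have h := hL.2 (z + (-(k : ℤ) - 1) * N)
      rw [show z + (-(k : ℤ) - 1) * N + N = z + (-(k : ℤ)) * N by ring] at h
      rw [ih] at h
      linarith [h]

theorem unique_decomposition_into_Delta (K N a b : ℤ) (hK : 0 < K) (hN : 0 < N)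
    (hm : 0 < a * N - b * K)
    (L : ℤ → ℤ) (hL : IsLP K N L) (hle : ∀ y : ℤ, L y ≤ LPshift a b L y)
    (x y : ℤ) :
    ∃! q : ℤ × ℤ × ℤ × ℤ,
      (q.1, q.2.1) ∈ Delta N a b L ∧
      x = q.1 + q.2.2.1 * K + q.2.2.2 * a ∧
      y = q.2.1 - q.2.2.1 * N - q.2.2.2 * b := by
  set m : ℤ := a * N - b * K with hm_def
  set g : ℤ → ℤ := fun r => L (y + r * b) + r * a with hg_def
  have hgsucc : ∀ r : ℤ, g r ≤ g (r + 1) := by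
    intro r
    have h := hle (y + r * b)
    simp only [LPshift] at h
    show L (y + r * b) + r * a ≤ L (y + (r + 1) * b) + (r + 1) * a
    rw [show y + (r + 1) * b = y + r * b + b by ring]
    linarith
  have hgmono : Monotone g := monotone_int_of_le_succ hgsucc
  have hgshift : ∀ r t : ℤ, g (r + t * N) = g r + t * m := by
    intro r t
    have h1 : L (y + (r + t * N) * b) = L (y + r * b) - (t * b) * K := by
      have := hL.add_mul' (y + r * b) (t * b)
      rw [show y + r * b + t * b * N = y + (r + t * N) * b by ring] at this
      exact this
    simp only [hg_def]
    rw [h1, hm_def]; ring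
  -- nonempty
  have hinh : ∃ r : ℤ, g r ≤ x := by
    refine ⟨(-(((g 0 - x).natAbs : ℤ) + 1)) * N, ?_⟩
    have h1 : g ((-(((g 0 - x).natAbs : ℤ) + 1)) * N) =
        g 0 + (-(((g 0 - x).natAbs : ℤ) + 1)) * m := by
      have := hgshift 0 (-(((g 0 - x).natAbs : ℤ) + 1))
      simpa using this
    rw [h1]
    have habs : g 0 - x ≤ ((g 0 - x).natAbs : ℤ) := Int.le_natAbs
    have hm1 : 1 ≤ m := hm
    nlinarith [Int.natCast_nonneg (g 0 - x).natAbs]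
  -- bounded above
  have hbdd : ∃ B : ℤ, ∀ r : ℤ, g r ≤ x → r ≤ B := by
    refine ⟨(((x - g 0).natAbs : ℤ) + 1) * N, ?_⟩
    intro r hr
    by_contra hc
    push_neg at hc
    have h1 : g ((((x - g 0).natAbs : ℤ) + 1) * N) =
        g 0 + (((x - g 0).natAbs : ℤ) + 1) * m := by
      have := hgshift 0 ((((x - g 0).natAbs : ℤ) + 1)); simpa using this
    have h2 : g ((((x - g 0).natAbs : ℤ) + 1) * N) ≤ g r := hgmono hc.le
    have habs : x - g 0 ≤ ((x - g 0).natAbs : ℤ) := Int.le_natAbs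
    have hm1 : 1 ≤ m := hm
    nlinarith [Int.natCast_nonneg (x - g 0).natAbs]
  obtain ⟨r, hrle, hrmax⟩ := Int.exists_greatest_of_bdd hbdd hinh
  have hrlt : x < g (r + 1) := by
    by_contra hc
    push_neg at hc
    have := hrmax (r + 1) hc
    omega
  -- define s, y', x'
  set t₀ : ℤ := y + r * b with ht₀
  set s : ℤ := -(t₀ / N) with hs_def
  set y' : ℤ := t₀ % N with hy'_def
  set x' : ℤ := x - r * a - s * K with hx'_def
  have hy'eq : y' = t₀ + s * N := by
    rw [hy'_def, hs_def, Int.emod_def]; ring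
  have hy'0 : 0 ≤ y' := Int.emod_nonneg t₀ (by omega)
  have hy'N : y' < N := Int.emod_lt_of_pos t₀ hN
  have hLy' : L y' = L t₀ - s * K := by
    rw [hy'eq]; exact hL.add_mul' t₀ s
  have hLy'b : L (y' + b) = L (t₀ + b) - s * K := by
    rw [hy'eq, show t₀ + s * N + b = (t₀ + b) + s * N by ring]
    exact hL.add_mul' (t₀ + b) s
  have hgr : L t₀ + r * a ≤ x := hrle
  have hgr1 : x < L (t₀ + b) + (r + 1) * a := by
    have : g (r + 1) = L (t₀ + b) + (r + 1) * a := by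
      simp only [hg_def, ht₀]; rw [show y + (r + 1) * b = y + r * b + b by ring]
    rwa [this] at hrlt
  refine ⟨(x', y', s, r), ⟨⟨⟨?_, ?_⟩, hy'0, hy'N⟩, by rw [hx'_def]; ring, ?_⟩, ?_⟩
  · show L y' ≤ x'
    rw [hLy', hx'_def]; linarith
  · show x' < LPshift a b L y'
    show x' < L (y' + b) + a
    rw [hLy'b, hx'_def]; linarith
  · show y = y' - s * N - r * b
    rw [hy'eq, ht₀]; ring
  · rintro ⟨x₁, y₁, s₁, r₁⟩ ⟨⟨⟨hm1, hm2⟩, hy10, hy1N⟩, hx1, hy1⟩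
    simp only at hm1 hm2 hy10 hy1N hx1 hy1 ⊢
    have hm2' : x₁ < L (y₁ + b) + a := hm2
    have hy1b : y + r₁ * b = y₁ - s₁ * N := by rw [hy1]; ring
    have hLcalc : L (y + r₁ * b) = L y₁ + s₁ * K := by
      rw [hy1b, show y₁ - s₁ * N = y₁ + (-s₁) * N by ring, hL.add_mul' y₁ (-s₁)]; ring
    have hLcalcb : L (y + r₁ * b + b) = L (y₁ + b) + s₁ * K := by
      rw [hy1b, show y₁ - s₁ * N + b = (y₁ + b) + (-s₁) * N by ring,
        hL.add_mul' (y₁ + b) (-s₁)]; ring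
    have hgr₁ : g r₁ ≤ x := by
      simp only [hg_def]; rw [hLcalc, hx1]; linarith
    have hgr₁1 : x < g (r₁ + 1) := by
      simp only [hg_def]
      rw [show y + (r₁ + 1) * b = y + r₁ * b + b by ring, hLcalcb, hx1]
      linarith
    have hr₁r : r₁ = r := by
      have h1 : r₁ ≤ r := hrmax r₁ hgr₁
      rcases eq_or_lt_of_le h1 with h | h
      · exact h
      · exfalso
        have : g (r₁ + 1) ≤ g r := hgmono (by omega)
        omega
    -- now s₁ = s
    have hy1eq : y₁ = t₀ + s₁ * N := by rw [ht₀, hy1, hr₁r]; ring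
    have hss : s₁ = s := by
      have hd : (s₁ - s) * N = y₁ - y' := by rw [hy1eq, hy'eq]; ring
      rcases lt_trichotomy s₁ s with h | h | h
      · exfalso
        have h2 := mul_le_mul_of_nonneg_right (show s₁ - s ≤ -1 by omega) hN.le
        linarith
      · exact h
      · exfalso
        have h2 := mul_le_mul_of_nonneg_right (show (1:ℤ) ≤ s₁ - s by omega) hN.le
        linarith
    have hx1eq : x₁ = x' := by rw [hx'_def, hx1, hss, hr₁r]; ring
    have hy1eq' : y₁ = y' := by rw [hy1eq, hss, hy'eq]
    simp [hx1eq, hy1eq', hss, hr₁r]
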